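/- Fix an iteration l of the primal-dual algorithm with active moats 𝒜_l and let C_A denote the SCC part of moat A. In the contracted graph G' (keeping only vertices in active moats, contracting each C_A, dropping Steiner nodes not hit by killer/expansion edges, and removing parallel edges), for each active moat A: |Δ^l_Killer(A) ∪ Δ^l_Exp(A)| ≤ |δ^{in}_{G'}(C_A)| + 1, provided (a) each Steiner node has in-degree at most 1 among killer/expansion edges of F̄, (b) each Steiner node in A \ C_A has an F_l-edge into C_A, and (c) at most one killer/expansion edge of F̄ enters C_A. -/

import Mathlib

variable {V : Type*} [Fintype V] [DecidableEq V]

/-- Counting lemma for the contracted graph `G'`. Let `A` be an active moat with SCC part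
`C_A ⊆ A`, let `KE` be the killer/expansion edges of `F̄`, and let `Fl` be the edges bought
so far. Assume: (a) each Steiner node has in-degree at most 1 among the edges of `KE`;
heads of `KE`-edges entering `A` outside `C_A` are Steiner nodes; (b) each such Steiner
node of `A \ C_A` has an `Fl`-edge into `C_A` (giving the corresponding edge of
`δ^{in}_{G'}(C_A)` after contracting `C_A` and removing parallel edges); and
(c) at most one `KE`-edge enters `C_A`. Then the number of killer/expansion edges entering
the moat `A` is at most `|δ^{in}_{G'}(C_A)| + 1`, where `δ^{in}_{G'}(C_A)` is identified
with the set of retained Steiner nodes of `A \ C_A` having an `Fl`-edge into `C_A`. -/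
theorem killer_expansion_into_moat_le_contracted_indegree
    (r : V) (X : Finset V) (A CA : Finset V) (Fl KE : Finset (V × V))
    (hCAsub : CA ⊆ A)
    (ha : ∀ v : V, v ∉ insert r X → (KE.filter (fun e => e.2 = v)).card ≤ 1)
    (hheads : ∀ e ∈ KE, e.1 ∉ A → e.2 ∈ A → e.2 ∉ CA → e.2 ∉ insert r X)
    (hb : ∀ s ∈ A, s ∉ CA → s ∉ insert r X → ∃ f ∈ Fl, f.1 = s ∧ f.2 ∈ CA)
    (hc : (KE.filter (fun e => e.1 ∉ CA ∧ e.2 ∈ CA)).card ≤ 1) :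
    (KE.filter (fun e => e.1 ∉ A ∧ e.2 ∈ A)).card ≤
      ((A \ CA).filter (fun s => s ∉ insert r X ∧
        (∃ e ∈ KE, e.2 = s ∧ e.1 ∉ A) ∧
        (∃ f ∈ Fl, f.1 = s ∧ f.2 ∈ CA))).card + 1 := by
  classical
  set T := ((A \ CA).filter (fun s => s ∉ insert r X ∧
        (∃ e ∈ KE, e.2 = s ∧ e.1 ∉ A) ∧
        (∃ f ∈ Fl, f.1 = s ∧ f.2 ∈ CA))) with hT
  have hsplit : KE.filter (fun e => e.1 ∉ A ∧ e.2 ∈ A) =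
      (KE.filter (fun e => e.1 ∉ A ∧ e.2 ∈ A ∧ e.2 ∉ CA)) ∪
      (KE.filter (fun e => e.1 ∉ A ∧ e.2 ∈ A ∧ e.2 ∈ CA)) := by
    ext e
    simp only [Finset.mem_filter, Finset.mem_union]
    tauto
  rw [hsplit]
  refine le_trans (Finset.card_union_le _ _) ?_
  have h1 : (KE.filter (fun e => e.1 ∉ A ∧ e.2 ∈ A ∧ e.2 ∉ CA)).card ≤ T.card := by
    apply Finset.card_le_card_of_injOn (fun e => e.2)
    · intro e he
      simp only [Finset.mem_coe, Finset.mem_filter] at he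
      obtain ⟨heKE, h1, h2, h3⟩ := he
      have hSt := hheads e heKE h1 h2 h3
      simp only [hT, Finset.mem_coe, Finset.mem_filter, Finset.mem_sdiff]
      exact ⟨⟨h2, h3⟩, hSt, ⟨e, heKE, rfl, h1⟩, hb e.2 h2 h3 hSt⟩
    · intro e he e' he' hee
      simp only [Finset.mem_coe, Finset.mem_filter] at he he'
      have hSt := hheads e he.1 he.2.1 he.2.2.1 he.2.2.2
      have hcard := ha e.2 hSt
      have heme : e ∈ KE.filter (fun x => x.2 = e.2) := by
        simp [Finset.mem_filter, he.1]
      have heme' : e' ∈ KE.filter (fun x => x.2 = e.2) := by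
        simp [Finset.mem_filter, he'.1, hee]
      exact Finset.card_le_one.mp hcard e' heme' e heme ▸ rfl
  have h2 : (KE.filter (fun e => e.1 ∉ A ∧ e.2 ∈ A ∧ e.2 ∈ CA)).card ≤ 1 := by
    refine le_trans (Finset.card_le_card ?_) hc
    intro e he
    simp only [Finset.mem_filter] at he ⊢
    exact ⟨he.1, fun h => he.2.1 (hCAsub h), he.2.2.2⟩
  omega
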